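/- For any triangle abc and any segment pq that intersects the interior of the triangle abc, at least one of the six segments pa, pb, pc, qa, qb, qc intersects the interior of the triangle abc. -/
import Mathlib

abbrev Plane := EuclideanSpace ℝ (Fin 2)

open Set

lemma key_lemma (B : AffineBasis (Fin 3) ℝ Plane) (u : Plane) (i0 : Fin 3)
    (h : ∀ j, j ≠ i0 → 0 < B.coord j u) :
    ∃ y ∈ segment ℝ u (B i0), ∀ i, 0 < B.coord i y := by
  rcases le_or_gt (B.coord i0 u) 0 with hcp | hcp
  · set cp := B.coord i0 u with hcpdef
    set s : ℝ := (1/2 - cp) / (1 - cp) with hs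
    have hden : (0:ℝ) < 1 - cp := by linarith
    have hs0 : 0 ≤ s := div_nonneg (by linarith) hden.le
    have hs1 : s ≤ 1 := by
      rw [hs, div_le_one hden]; linarith
    have h1s : 0 < 1 - s := by
      rw [hs]; rw [sub_pos, div_lt_one hden]; linarith
    refine ⟨(1 - s) • u + s • (B i0), ?_, ?_⟩
    · exact ⟨1 - s, s, by linarith, hs0, by ring, rfl⟩
    · intro i
      have hcombo : B.coord i ((1 - s) • u + s • (B i0))
          = (1 - s) * B.coord i u + s * B.coord i (B i0) :=
        Convex.combo_affine_apply (by ring)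
      rcases eq_or_ne i i0 with rfl | hne
      · have hc1 : B.coord i (B i) = 1 := by rw [B.coord_apply]; simp
        rw [hcombo, hc1]
        have : (1 - s) * cp + s * 1 = 1/2 := by
          rw [hs]; field_simp; ring
        rw [← hcpdef, this]; norm_num
      · rw [hcombo, B.coord_apply, if_neg hne]
        have := h i hne
        nlinarith
  · exact ⟨u, left_mem_segment ℝ u (B i0), fun i => by
      rcases eq_or_ne i i0 with rfl | hne
      · exact hcp
      · exact h i hne⟩

theorem triangle_hide (a b c p q : Plane)
    (htri : ¬ Collinear ℝ ({a, b, c} : Set Plane)) (hpq : p ≠ q)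
    (hint : (segment ℝ p q ∩ interior (convexHull ℝ ({a, b, c} : Set Plane))).Nonempty) :
    ∃ u v : Plane, (u = p ∨ u = q) ∧ (v = a ∨ v = b ∨ v = c) ∧
      (segment ℝ u v ∩ interior (convexHull ℝ ({a, b, c} : Set Plane))).Nonempty := by
  classical
  set f : Fin 3 → Plane := ![a, b, c] with hf
  have hrange : Set.range f = ({a, b, c} : Set Plane) := by
    ext x
    simp [hf, Fin.exists_fin_succ, Fin.tail_cons]
    tauto
  have hind : AffineIndependent ℝ f := by
    rw [affineIndependent_iff_not_collinear, hrange]; exact htri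
  have htop : affineSpan ℝ (Set.range f) = ⊤ := by
    rw [hind.affineSpan_eq_top_iff_card_eq_finrank_add_one]
    simp [finrank_euclideanSpace]
  let B : AffineBasis (Fin 3) ℝ Plane := ⟨f, hind, htop⟩
  have hBrange : Set.range (B : Fin 3 → Plane) = ({a, b, c} : Set Plane) := hrange
  have hInt : interior (convexHull ℝ ({a, b, c} : Set Plane))
      = {x | ∀ i, 0 < B.coord i x} := by
    rw [← hBrange, B.interior_convexHull]
  obtain ⟨x, hxseg, hxint⟩ := hint
  rw [hInt] at hxint
  obtain ⟨t1, t2, ht1, ht2, hsum, hx⟩ := hxseg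
  have hdisj : ∀ i, 0 < B.coord i p ∨ 0 < B.coord i q := by
    intro i
    by_contra hcon
    push_neg at hcon
    obtain ⟨h1, h2⟩ := hcon
    have hxi := hxint i
    have : B.coord i x = t1 * B.coord i p + t2 * B.coord i q := by
      rw [← hx]; exact Convex.combo_affine_apply hsum
    nlinarith
  have hvert : ∀ i0 : Fin 3, B i0 = a ∨ B i0 = b ∨ B i0 = c := by
    intro i0
    fin_cases i0
    · exact Or.inl rfl
    · exact Or.inr (Or.inl rfl)
    · exact Or.inr (Or.inr rfl)
  have main : ∀ (u : Plane), (u = p ∨ u = q) →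
      (∀ j : Fin 3, ∃ i0, j ≠ i0 → 0 < B.coord j u) → True := fun _ _ _ => trivial
  -- case: p fully positive
  by_cases hp : ∀ i, 0 < B.coord i p
  · exact ⟨p, a, Or.inl rfl, Or.inl rfl,
      ⟨p, left_mem_segment ℝ p a, by rw [hInt]; exact hp⟩⟩
  by_cases hq : ∀ i, 0 < B.coord i q
  · exact ⟨q, a, Or.inr rfl, Or.inl rfl,
      ⟨q, left_mem_segment ℝ q a, by rw [hInt]; exact hq⟩⟩
  push_neg at hp hq
  obtain ⟨i0, hi0⟩ := hp
  obtain ⟨j0, hj0⟩ := hq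
  have hqi0 : 0 < B.coord i0 q := (hdisj i0).resolve_left (not_lt.mpr hi0)
  have hpj0 : 0 < B.coord j0 p := (hdisj j0).resolve_right (not_lt.mpr hj0)
  have hne : i0 ≠ j0 := fun h => absurd (h ▸ hpj0) (not_lt.mpr hi0)
  by_cases hkp : ∀ j, j ≠ i0 → 0 < B.coord j p
  · obtain ⟨y, hyseg, hypos⟩ := key_lemma B p i0 hkp
    exact ⟨p, B i0, Or.inl rfl, hvert i0, ⟨y, hyseg, by rw [hInt]; exact hypos⟩⟩
  · push_neg at hkp
    obtain ⟨k, hki0, hkple⟩ := hkp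
    have hkq : 0 < B.coord k q := (hdisj k).resolve_left (not_lt.mpr hkple)
    have hkj0 : k ≠ j0 := fun h => absurd (h ▸ hkq) (not_lt.mpr hj0)
    have hcover : ∀ j : Fin 3, j ≠ j0 → 0 < B.coord j q := by
      intro j hj
      have h3 : j = i0 ∨ j = j0 ∨ j = k := by
        have e1 : i0.val ≠ j0.val := fun h => hne (Fin.ext h)
        have e2 : k.val ≠ i0.val := fun h => hki0 (Fin.ext h)
        have e3 : k.val ≠ j0.val := fun h => hkj0 (Fin.ext h)
        have := j.isLt; have := i0.isLt; have := j0.isLt; have := k.isLt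
        have : j.val = i0.val ∨ j.val = j0.val ∨ j.val = k.val := by omega
        rcases this with h | h | h
        · exact Or.inl (Fin.ext h)
        · exact Or.inr (Or.inl (Fin.ext h))
        · exact Or.inr (Or.inr (Fin.ext h))
      rcases h3 with rfl | rfl | rfl
      · exact hqi0
      · exact absurd rfl hj
      · exact hkq
    obtain ⟨y, hyseg, hypos⟩ := key_lemma B q j0 hcover
    exact ⟨q, B j0, Or.inr rfl, hvert j0, ⟨y, hyseg, by rw [hInt]; exact hypos⟩⟩
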